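/- Let 0 < m ≤ L, let 1 ≤ c < 2, and let f : ℝⁿ → ℝ be differentiable, m-strongly convex, with L-Lipschitz continuous gradient, with minimizer x* (so ∇f(x*) = 0). Let α : ℕ → ℝ be any sequence of step sizes with 1/(cL) ≤ α_k ≤ c/L for all k, and let ξ : ℕ → ℝⁿ satisfy ξ_{k+1} = ξ_k − α_k∇f(ξ_k). Then for all k ≥ 0, ‖ξ_k − x*‖ ≤ ρ̄^k · ‖ξ₀ − x*‖, where ρ̄ = max{c − 1, 1 − m/(cL)} < 1. -/

import Mathlib

open scoped RealInnerProductSpace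

variable {E : Type*} [NormedAddCommGroup E] [InnerProductSpace ℝ E] [CompleteSpace E]

theorem descent_aux (f : E → ℝ) (f' : E → E) (L : ℝ)
    (hdiff : ∀ x, HasGradientAt f (f' x) x)
    (hlip : ∀ x y, ‖f' y - f' x‖ ≤ L * ‖y - x‖) (x y : E) :
    f y ≤ f x + ⟪f' x, y - x⟫ + (L / 2) * ‖y - x‖ ^ 2 := by
  set v := y - x with hv
  have hline : ∀ t : ℝ, HasDerivAt (fun t : ℝ => f (x + t • v)) ⟪f' (x + t • v), v⟫ t := by
    intro t
    have h1 : HasDerivAt (fun t : ℝ => x + t • v) v t := by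
      simpa using ((hasDerivAt_id t).smul_const v).const_add x
    have h2 := (hdiff (x + t • v)).hasFDerivAt.comp_hasDerivAt t h1
    simp at h2
    exact h2
  set ψ : ℝ → ℝ := fun t => f (x + t • v) - t * ⟪f' x, v⟫ - L / 2 * t ^ 2 * ‖v‖ ^ 2 with hψ
  have hψd : ∀ t : ℝ, HasDerivAt ψ (⟪f' (x + t • v), v⟫ - ⟪f' x, v⟫ - L * t * ‖v‖ ^ 2) t := by
    intro t
    have h2 : HasDerivAt (fun t : ℝ => t * ⟪f' x, v⟫) ⟪f' x, v⟫ t := by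
      simpa using (hasDerivAt_id t).mul_const ⟪f' x, v⟫
    have h3 : HasDerivAt (fun t : ℝ => L / 2 * t ^ 2 * ‖v‖ ^ 2) (L * t * ‖v‖ ^ 2) t := by
      have := ((hasDerivAt_pow 2 t).const_mul (L / 2)).mul_const (‖v‖ ^ 2)
      refine this.congr_deriv ?_
      ring
    exact ((hline t).sub h2).sub h3
  have hanti : AntitoneOn ψ (Set.Icc 0 1) := by
    apply antitoneOn_of_deriv_nonpos (convex_Icc 0 1)
    · exact fun t _ => ((hψd t).continuousAt).continuousWithinAt
    · exact fun t _ => (hψd t).differentiableAt.differentiableWithinAt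
    · intro t ht
      rw [interior_Icc] at ht
      rw [(hψd t).deriv]
      have h4 : ⟪f' (x + t • v) - f' x, v⟫ ≤ ‖f' (x + t • v) - f' x‖ * ‖v‖ :=
        real_inner_le_norm _ _
      have h5 : ‖f' (x + t • v) - f' x‖ ≤ L * (t * ‖v‖) := by
        have := hlip x (x + t • v)
        simpa [norm_smul, abs_of_nonneg ht.1.le, mul_assoc] using this
      have h6 : ⟪f' (x + t • v), v⟫ - ⟪f' x, v⟫ ≤ L * t * ‖v‖ ^ 2 := by
        rw [← inner_sub_left]
        calc ⟪f' (x + t • v) - f' x, v⟫ ≤ ‖f' (x + t • v) - f' x‖ * ‖v‖ := h4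
          _ ≤ L * (t * ‖v‖) * ‖v‖ := by
              apply mul_le_mul_of_nonneg_right h5 (norm_nonneg _)
          _ = L * t * ‖v‖ ^ 2 := by ring
      linarith
  have h01 := hanti (Set.left_mem_Icc.2 zero_le_one) (Set.right_mem_Icc.2 zero_le_one) zero_le_one
  have e0 : ψ 0 = f x := by simp [hψ]
  have e1 : ψ 1 = f y - ⟪f' x, v⟫ - L / 2 * ‖v‖ ^ 2 := by simp [hψ, hv]
  rw [e0, e1] at h01
  linarith

-- sector bound
theorem sector_aux (f : E → ℝ) (f' : E → E) (m L : ℝ) (hm : 0 < m) (hmL : m ≤ L)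
    (hdiff : ∀ x, HasGradientAt f (f' x) x)
    (hsc : ∀ x y, f y ≥ f x + ⟪f' x, y - x⟫ + (m / 2) * ‖y - x‖ ^ 2)
    (hlip : ∀ x y, ‖f' y - f' x‖ ≤ L * ‖y - x‖) (x y : E) :
    ‖(f' y - f' x) - m • (y - x)‖ ^ 2 ≤ (L - m) * ⟪(f' y - f' x) - m • (y - x), y - x⟫ := by
  have hmono : ∀ x y : E, m * ‖y - x‖ ^ 2 ≤ ⟪f' y - f' x, y - x⟫ := by
    intro x y
    have h1 := hsc x y
    have h2 := hsc y x
    have e1 : ⟪f' y, x - y⟫ = -⟪f' y, y - x⟫ := by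
      rw [← inner_neg_right]; congr 1; abel
    have e2 : ‖x - y‖ = ‖y - x‖ := by rw [← norm_neg]; congr 1; abel
    rw [e1, e2] at h2
    rw [inner_sub_left]
    linarith
  rcases eq_or_lt_of_le hmL with rfl | hlt
  · -- m = L case
    have h1 := hmono x y
    have h2 := hlip x y
    have h3 : ‖f' y - f' x‖ ^ 2 ≤ m ^ 2 * ‖y - x‖ ^ 2 := by
      have := mul_self_le_mul_self (norm_nonneg (f' y - f' x)) h2
      nlinarith [norm_nonneg (y - x)]
    have eL : ‖f' y - f' x - m • (y - x)‖ ^ 2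
        = ‖f' y - f' x‖ ^ 2 - 2 * (m * ⟪f' y - f' x, y - x⟫) + m ^ 2 * ‖y - x‖ ^ 2 := by
      rw [norm_sub_sq_real, real_inner_smul_right, norm_smul, Real.norm_eq_abs,
        abs_of_pos hm, mul_pow]
    have eR : ⟪f' y - f' x - m • (y - x), y - x⟫
        = ⟪f' y - f' x, y - x⟫ - m * ‖y - x‖ ^ 2 := by
      rw [inner_sub_left, real_inner_smul_left, real_inner_self_eq_norm_sq]
    rw [eL, eR]
    nlinarith
  · -- m < L: co-coercivity of h = f - m/2 ‖·‖²
    set K := L - m with hK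
    have hKpos : 0 < K := by simp [hK]; linarith
    set h : E → ℝ := fun z => f z - m / 2 * ‖z‖ ^ 2 with hh
    set h' : E → E := fun z => f' z - m • z with hh'
    have expand : ∀ a b : E, ⟪h' a, b - a⟫ = ⟪f' a, b - a⟫ - m * ⟪a, b⟫ + m * ‖a‖ ^ 2 := by
      intro a b
      simp only [hh', inner_sub_left, real_inner_smul_left, inner_sub_right,
        real_inner_self_eq_norm_sq]
      try ring
    have normid : ∀ a b : E, ‖b - a‖ ^ 2 = ‖b‖ ^ 2 - 2 * ⟪a, b⟫ + ‖a‖ ^ 2 := by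
      intro a b
      rw [norm_sub_sq_real, real_inner_comm]
      try ring
    have hconv : ∀ a b : E, h a + ⟪h' a, b - a⟫ ≤ h b := by
      intro a b
      have h1 := hsc a b
      rw [expand]
      simp only [hh]
      rw [normid a b] at h1
      linarith
    have hdesc : ∀ a b : E, h b ≤ h a + ⟪h' a, b - a⟫ + K / 2 * ‖b - a‖ ^ 2 := by
      intro a b
      have h1 := descent_aux f f' L hdiff hlip a b
      rw [expand]
      simp only [hh]
      have h2 := normid a b
      nlinarith
    have key : ∀ a b : E, h a + ⟪h' a, b - a⟫ + 1 / (2 * K) * ‖h' b - h' a‖ ^ 2 ≤ h b := by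
      intro a b
      set Δ := h' b - h' a with hΔ
      set z := b - (1 / K) • Δ with hz
      have c1 := hconv a z
      have c2 := hdesc b z
      have e1 : z - b = -((1 / K) • Δ) := by rw [hz]; abel
      have e2 : ⟪h' b, z - b⟫ = -(1 / K) * ⟪h' b, Δ⟫ := by
        rw [e1, inner_neg_right, real_inner_smul_right]; ring
      have e3 : ‖z - b‖ ^ 2 = (1 / K) ^ 2 * ‖Δ‖ ^ 2 := by
        rw [e1, norm_neg, norm_smul, Real.norm_eq_abs,
          abs_of_pos (by positivity : (0:ℝ) < 1 / K), mul_pow]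
      have e4 : ⟪h' a, z - a⟫ = ⟪h' a, b - a⟫ - (1 / K) * ⟪h' a, Δ⟫ := by
        have : z - a = (b - a) - (1 / K) • Δ := by rw [hz]; abel
        rw [this, inner_sub_right, real_inner_smul_right]
      have e5 : ⟪h' b, Δ⟫ - ⟪h' a, Δ⟫ = ‖Δ‖ ^ 2 := by
        rw [← inner_sub_left, ← hΔ, real_inner_self_eq_norm_sq]
      rw [e2, e3] at c2
      rw [e4] at c1
      have r1 : K / 2 * ((1 / K) ^ 2 * ‖Δ‖ ^ 2) = 1 / (2 * K) * ‖Δ‖ ^ 2 := by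
        field_simp
      have r2 : 1 / K * ⟪h' b, Δ⟫ - 1 / K * ⟪h' a, Δ⟫ = 1 / K * ‖Δ‖ ^ 2 := by
        rw [← mul_sub, e5]
      have r3 : 1 / K * ‖Δ‖ ^ 2 = 2 * (1 / (2 * K) * ‖Δ‖ ^ 2) := by
        field_simp
      linarith
    have k1 := key x y
    have k2 := key y x
    have e6 : ⟪h' y, x - y⟫ = -⟪h' y, y - x⟫ := by
      rw [← inner_neg_right]; congr 1; abel
    have e7 : ‖h' x - h' y‖ = ‖h' y - h' x‖ := by rw [← norm_neg]; congr 1; abel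
    rw [e6, e7] at k2
    have hco : ‖h' y - h' x‖ ^ 2 ≤ K * ⟪h' y - h' x, y - x⟫ := by
      rw [inner_sub_left]
      have hT : 1 / (2 * K) * ‖h' y - h' x‖ ^ 2 + 1 / (2 * K) * ‖h' y - h' x‖ ^ 2
          ≤ ⟪h' y, y - x⟫ - ⟪h' x, y - x⟫ := by linarith
      have hT2 : 1 / K * ‖h' y - h' x‖ ^ 2 ≤ ⟪h' y, y - x⟫ - ⟪h' x, y - x⟫ := by
        have : 1 / (2 * K) * ‖h' y - h' x‖ ^ 2 + 1 / (2 * K) * ‖h' y - h' x‖ ^ 2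
            = 1 / K * ‖h' y - h' x‖ ^ 2 := by field_simp; ring
        linarith
      calc ‖h' y - h' x‖ ^ 2 = K * (1 / K * ‖h' y - h' x‖ ^ 2) := by
            field_simp
        _ ≤ K * (⟪h' y, y - x⟫ - ⟪h' x, y - x⟫) :=
            mul_le_mul_of_nonneg_left hT2 hKpos.le
    have e8 : h' y - h' x = (f' y - f' x) - m • (y - x) := by
      simp only [hh', smul_sub]; abel
    rw [e8] at hco
    exact hco

theorem step_aux {E : Type*} [NormedAddCommGroup E] [InnerProductSpace ℝ E]
    (m L c α : ℝ) (hm : 0 < m) (hmL : m ≤ L) (hc1 : 1 ≤ c) (hc2 : c < 2)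
    (d g : E)
    (hSm : m * ‖d‖ ^ 2 ≤ ⟪g, d⟫) (hSL : ⟪g, d⟫ ≤ L * ‖d‖ ^ 2)
    (hG : ‖g‖ ^ 2 ≤ (L + m) * ⟪g, d⟫ - L * m * ‖d‖ ^ 2)
    (hα1 : 1 / (c * L) ≤ α) (hα2 : α ≤ c / L) :
    ‖d - α • g‖ ≤ max (c - 1) (1 - m / (c * L)) * ‖d‖ := by
  have hL : 0 < L := lt_of_lt_of_le hm hmL
  have hc0 : 0 < c := by linarith
  have hcL : 0 < c * L := by positivity
  have hα0 : 0 < α := lt_of_lt_of_le (by positivity) hα1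
  set ρ := max (c - 1) (1 - m / (c * L)) with hρ
  have hρc : c - 1 ≤ ρ := le_max_left _ _
  have hρm : 1 - m / (c * L) ≤ ρ := le_max_right _ _
  have hρ0 : 0 ≤ ρ := le_trans (by linarith) hρc
  have hd1 : m / (c * L) ≤ α * m := by
    calc m / (c * L) = 1 / (c * L) * m := by ring
      _ ≤ α * m := mul_le_mul_of_nonneg_right hα1 hm.le
  have hd2 : α * m ≤ c := by
    calc α * m ≤ c / L * m := mul_le_mul_of_nonneg_right hα2 hm.le
      _ ≤ c := by rw [div_mul_eq_mul_div, div_le_iff₀ hL]; nlinarith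
  have hd3 : m / (c * L) ≤ α * L := by
    calc m / (c * L) ≤ 1 / (c * L) * L := by
          rw [div_le_iff₀ hcL]
          field_simp
          linarith
      _ ≤ α * L := mul_le_mul_of_nonneg_right hα1 hL.le
  have hd4 : α * L ≤ c := by
    calc α * L ≤ c / L * L := mul_le_mul_of_nonneg_right hα2 hL.le
      _ = c := by field_simp
  have eN : ‖d - α • g‖ ^ 2 = ‖d‖ ^ 2 - 2 * (α * ⟪g, d⟫) + α ^ 2 * ‖g‖ ^ 2 := by
    rw [norm_sub_sq_real, real_inner_smul_right, norm_smul, mul_pow, Real.norm_eq_abs,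
      sq_abs, real_inner_comm d g]
  have hsq : ‖d - α • g‖ ^ 2 ≤ (ρ * ‖d‖) ^ 2 := by
    rcases le_or_gt (α * (m + L)) 2 with hcase | hcase
    · -- bound by (1 - α m)^2
      have hGα : α ^ 2 * ‖g‖ ^ 2 ≤ α ^ 2 * ((L + m) * ⟪g, d⟫ - L * m * ‖d‖ ^ 2) :=
        mul_le_mul_of_nonneg_left hG (sq_nonneg α)
      have key : 0 ≤ α * (⟪g, d⟫ - m * ‖d‖ ^ 2) * (2 - α * (m + L)) :=
        mul_nonneg (mul_nonneg hα0.le (by linarith)) (by linarith)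
      have h1 : ‖d - α • g‖ ^ 2 ≤ (1 - α * m) ^ 2 * ‖d‖ ^ 2 := by
        rw [eN]; nlinarith [key, hGα]
      have h2 : (1 - α * m) ^ 2 ≤ ρ ^ 2 := by
        apply sq_le_sq' <;> linarith
      calc ‖d - α • g‖ ^ 2 ≤ (1 - α * m) ^ 2 * ‖d‖ ^ 2 := h1
        _ ≤ ρ ^ 2 * ‖d‖ ^ 2 := mul_le_mul_of_nonneg_right h2 (sq_nonneg _)
        _ = (ρ * ‖d‖) ^ 2 := by ring
    · -- bound by (1 - α L)^2
      have hGα : α ^ 2 * ‖g‖ ^ 2 ≤ α ^ 2 * ((L + m) * ⟪g, d⟫ - L * m * ‖d‖ ^ 2) :=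
        mul_le_mul_of_nonneg_left hG (sq_nonneg α)
      have key : 0 ≤ α * (L * ‖d‖ ^ 2 - ⟪g, d⟫) * (α * (m + L) - 2) :=
        mul_nonneg (mul_nonneg hα0.le (by linarith)) (by linarith)
      have h1 : ‖d - α • g‖ ^ 2 ≤ (1 - α * L) ^ 2 * ‖d‖ ^ 2 := by
        rw [eN]; nlinarith [key, hGα]
      have h2 : (1 - α * L) ^ 2 ≤ ρ ^ 2 := by
        apply sq_le_sq' <;> linarith
      calc ‖d - α • g‖ ^ 2 ≤ (1 - α * L) ^ 2 * ‖d‖ ^ 2 := h1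
        _ ≤ ρ ^ 2 * ‖d‖ ^ 2 := mul_le_mul_of_nonneg_right h2 (sq_nonneg _)
        _ = (ρ * ‖d‖) ^ 2 := by ring
  have := Real.sqrt_le_sqrt hsq
  rwa [Real.sqrt_sq (norm_nonneg _), Real.sqrt_sq (mul_nonneg hρ0 (norm_nonneg _))] at this

/-- Gradient descent with a line-search step size confined to 𝒜 = [1/(cL), c/L] with
1 ≤ c < 2 converges linearly at the worst-case rate
ρ̄ = max{c − 1, 1 − m/(cL)} < 1 obtained from the sector bound. -/
theorem stmt_12 {n : ℕ} (m L c : ℝ) (hm : 0 < m) (hmL : m ≤ L)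
    (hc1 : 1 ≤ c) (hc2 : c < 2)
    (f : EuclideanSpace ℝ (Fin n) → ℝ)
    (f' : EuclideanSpace ℝ (Fin n) → EuclideanSpace ℝ (Fin n))
    (hdiff : ∀ x, HasGradientAt f (f' x) x)
    (hsc : ∀ x y, f y ≥ f x + ⟪f' x, y - x⟫ + (m / 2) * ‖y - x‖ ^ 2)
    (hlip : ∀ x y, ‖f' y - f' x‖ ≤ L * ‖y - x‖)
    (xstar : EuclideanSpace ℝ (Fin n)) (hstar : f' xstar = 0)
    (α : ℕ → ℝ) (hα : ∀ k, 1 / (c * L) ≤ α k ∧ α k ≤ c / L)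
    (ξ : ℕ → EuclideanSpace ℝ (Fin n))
    (hξ : ∀ k, ξ (k + 1) = ξ k - α k • f' (ξ k)) :
    max (c - 1) (1 - m / (c * L)) < 1 ∧
    ∀ k : ℕ, ‖ξ k - xstar‖ ≤ (max (c - 1) (1 - m / (c * L))) ^ k * ‖ξ 0 - xstar‖ := by
  have hL : 0 < L := lt_of_lt_of_le hm hmL
  have hc0 : 0 < c := by linarith
  have hcL : 0 < c * L := by positivity
  set ρ := max (c - 1) (1 - m / (c * L)) with hρ
  have hρ0 : 0 ≤ ρ := le_trans (by linarith) (le_max_left _ _)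
  have hρ1 : ρ < 1 := by
    apply max_lt (by linarith)
    have : 0 < m / (c * L) := by positivity
    linarith
  refine ⟨hρ1, ?_⟩
  -- one-step contraction
  have step : ∀ k, ‖ξ (k + 1) - xstar‖ ≤ ρ * ‖ξ k - xstar‖ := by
    intro k
    set y := ξ k with hy
    set d : EuclideanSpace ℝ (Fin n) := y - xstar with hd
    set g : EuclideanSpace ℝ (Fin n) := f' y with hg
    have hSm : m * ‖d‖ ^ 2 ≤ ⟪g, d⟫ := by
      have h1 := hsc xstar y
      have h2 := hsc y xstar
      have e1 : ⟪f' y, xstar - y⟫ = -⟪f' y, y - xstar⟫ := by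
        rw [← inner_neg_right]; congr 1; abel
      have e2 : ‖xstar - y‖ = ‖y - xstar‖ := by rw [← norm_neg]; congr 1; abel
      rw [e1, e2] at h2
      rw [hstar] at h1
      simp only [inner_zero_left] at h1
      exact le_trans (by linarith) (le_of_eq rfl)
    have hSL : ⟪g, d⟫ ≤ L * ‖d‖ ^ 2 := by
      have h1 : ⟪g, d⟫ ≤ ‖g‖ * ‖d‖ := real_inner_le_norm _ _
      have h2 : ‖g‖ ≤ L * ‖d‖ := by
        have := hlip xstar y
        rw [hstar, sub_zero] at this
        exact this
      calc ⟪g, d⟫ ≤ ‖g‖ * ‖d‖ := h1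
        _ ≤ L * ‖d‖ * ‖d‖ := mul_le_mul_of_nonneg_right h2 (norm_nonneg _)
        _ = L * ‖d‖ ^ 2 := by ring
    have hG : ‖g‖ ^ 2 ≤ (L + m) * ⟪g, d⟫ - L * m * ‖d‖ ^ 2 := by
      have hs := sector_aux f f' m L hm hmL hdiff hsc hlip xstar y
      rw [hstar, sub_zero] at hs
      have eL : ‖g - m • d‖ ^ 2 = ‖g‖ ^ 2 - 2 * (m * ⟪g, d⟫) + m ^ 2 * ‖d‖ ^ 2 := by
        rw [norm_sub_sq_real, real_inner_smul_right, norm_smul, Real.norm_eq_abs,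
          abs_of_pos hm, mul_pow]
      have eR : ⟪g - m • d, d⟫ = ⟪g, d⟫ - m * ‖d‖ ^ 2 := by
        rw [inner_sub_left, real_inner_smul_left, real_inner_self_eq_norm_sq]
      rw [eL, eR] at hs
      nlinarith [hs]
    have hstep := step_aux m L c (α k) hm hmL hc1 hc2 d g hSm hSL hG (hα k).1 (hα k).2
    have e3 : ξ (k + 1) - xstar = d - α k • g := by
      rw [hξ k, hd, hg, hy]; abel
    rw [e3]
    exact hstep
  intro k
  induction k with
  | zero => simp
  | succ k ih =>
    calc ‖ξ (k + 1) - xstar‖ ≤ ρ * ‖ξ k - xstar‖ := step k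
      _ ≤ ρ * (ρ ^ k * ‖ξ 0 - xstar‖) := mul_le_mul_of_nonneg_left ih hρ0
      _ = ρ ^ (k + 1) * ‖ξ 0 - xstar‖ := by ring
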